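/- In the GARCH(1,1) model, the lower bound ǍVaR^α_t(L_T) := κ · ((1/(1−α)) ∫_α^1 sqrt(a₁ F_{Z²}^{-1}(y) + b) dy)^{T-t-1} · σ_{t+1}, with κ = (1/(1−α)) ∫_α^1 F_Z^{-1}(u) du, satisfies ÃVaR^α_t(L_T) ≥ ǍVaR^α_t(L_T) for all t = 0,…,T−1. -/

import Mathlib

open MeasureTheory ProbabilityTheory Set

/-- The distribution function of a real random variable `Z` under `μ`. -/
noncomputable def distFun {Ω : Type*} [MeasurableSpace Ω] (μ : Measure Ω) (Z : Ω → ℝ) (x : ℝ) : ℝ :=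
  (μ (Z ⁻¹' Set.Iic x)).toReal

/-- Left-continuous quantile function (generalized inverse) of a distribution function. -/
noncomputable def quantileFun (F : ℝ → ℝ) (α : ℝ) : ℝ :=
  sInf {x : ℝ | α ≤ F x}

/-- The conditional Value-at-Risk at level `α` given the sub-σ-algebra `𝔉`, realized pointwise
via the regular conditional distribution: `VaR^α_t(L)(ω) = inf {m : P(L ≤ m | 𝔉)(ω) ≥ α}`. -/
noncomputable def condVaR {Ω : Type*} (𝔉 : MeasurableSpace Ω) [mΩ : MeasurableSpace Ω]
    [StandardBorelSpace Ω] [Nonempty Ω] (μ : Measure Ω) [IsFiniteMeasure μ]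
    (α : ℝ) (L : Ω → ℝ) (ω : Ω) : ℝ :=
  sInf {m : ℝ | α ≤ ((condExpKernel μ 𝔉 ω) (L ⁻¹' Set.Iic m)).toReal}

open Filter Topology
open scoped ENNReal

namespace AVaRAux

variable {Ω Ω' : Type*} [MeasurableSpace Ω] [MeasurableSpace Ω']

lemma distFun_nonneg (ν : Measure Ω) (V : Ω → ℝ) (x : ℝ) : 0 ≤ distFun ν V x :=
  ENNReal.toReal_nonneg

lemma distFun_mono (ν : Measure Ω) [IsFiniteMeasure ν] (V : Ω → ℝ) :
    Monotone (distFun ν V) := by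
  intro x y hxy
  exact ENNReal.toReal_mono (measure_ne_top _ _)
    (measure_mono (preimage_mono (Iic_subset_Iic.2 hxy)))

lemma distFun_le_one (ν : Measure Ω) [IsProbabilityMeasure ν] (V : Ω → ℝ) (x : ℝ) :
    distFun ν V x ≤ 1 := by
  have := prob_le_one (μ := ν) (s := V ⁻¹' Iic x)
  simpa [distFun] using ENNReal.toReal_mono (by simp) this

lemma measure_eq_ofReal_distFun (ν : Measure Ω) [IsFiniteMeasure ν] (V : Ω → ℝ) (x : ℝ) :
    ν (V ⁻¹' Iic x) = ENNReal.ofReal (distFun ν V x) := by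
  rw [distFun, ENNReal.ofReal_toReal (measure_ne_top _ _)]

/-- Continuity from above of a distribution function through rationals. -/
lemma measure_Iic_eq_iInf (ν : Measure Ω) [IsFiniteMeasure ν] {V : Ω → ℝ}
    (hV : Measurable V) (x : ℝ) :
    ν (V ⁻¹' Iic x) = ⨅ q : {q : ℚ // x < (q : ℝ)}, ν (V ⁻¹' Iic (q : ℝ)) := by
  have hne : Nonempty {q : ℚ // x < (q : ℝ)} := by
    obtain ⟨q, hq⟩ := exists_rat_gt x
    exact ⟨⟨q, hq⟩⟩
  have hiInter : (⋂ q : {q : ℚ // x < (q : ℝ)}, V ⁻¹' Iic ((q : ℚ) : ℝ)) = V ⁻¹' Iic x := by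
    ext v
    simp only [mem_iInter, mem_preimage, mem_Iic]
    constructor
    · intro h
      by_contra hlt
      push_neg at hlt
      obtain ⟨q, hq1, hq2⟩ := exists_rat_btwn hlt
      exact absurd (h ⟨q, hq1⟩) (not_le.2 hq2)
    · intro h q
      exact h.trans (le_of_lt q.2)
  rw [← hiInter]
  refine Directed.measure_iInter (fun q => (hV measurableSet_Iic).nullMeasurableSet) ?_
    ⟨hne.some, measure_ne_top _ _⟩
  intro q₁ q₂
  refine ⟨⟨min q₁.1 q₂.1, by push_cast; exact lt_min q₁.2 q₂.2⟩, ?_, ?_⟩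
  · exact preimage_mono (Iic_subset_Iic.2 (by push_cast; exact min_le_left _ _))
  · exact preimage_mono (Iic_subset_Iic.2 (by push_cast; exact min_le_right _ _))

/-- Two cdfs of finite measures that agree on rationals agree everywhere. -/
lemma distFun_ext_of_rat (ν : Measure Ω) (ν' : Measure Ω') [IsFiniteMeasure ν]
    [IsFiniteMeasure ν'] {V : Ω → ℝ} {V' : Ω' → ℝ} (hV : Measurable V) (hV' : Measurable V')
    (h : ∀ q : ℚ, distFun ν V q = distFun ν' V' q) (x : ℝ) :
    distFun ν V x = distFun ν' V' x := by
  have h2 : ∀ q : ℚ, ν (V ⁻¹' Iic (q : ℝ)) = ν' (V' ⁻¹' Iic (q : ℝ)) := by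
    intro q
    rw [measure_eq_ofReal_distFun, measure_eq_ofReal_distFun, h q]
  have : ν (V ⁻¹' Iic x) = ν' (V' ⁻¹' Iic x) := by
    rw [measure_Iic_eq_iInf ν hV x, measure_Iic_eq_iInf ν' hV' x]
    exact iInf_congr fun q => h2 q.1
  rw [distFun, distFun, this]

/-- distFun converges to 1 along ℕ → ∞ (probability measure), giving nonemptiness of
the quantile set. -/
lemma exists_distFun_ge (ν : Measure Ω) [IsProbabilityMeasure ν] {V : Ω → ℝ}
    (hV : Measurable V) {u : ℝ} (hu : u < 1) :
    ∃ x : ℝ, u ≤ distFun ν V x := by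
  have hU : (⋃ n : ℕ, V ⁻¹' Iic (n : ℝ)) = univ := by
    ext v
    simp only [mem_iUnion, mem_preimage, mem_Iic, mem_univ, iff_true]
    obtain ⟨n, hn⟩ := exists_nat_ge (V v)
    exact ⟨n, hn⟩
  have hmono : Monotone fun n : ℕ => V ⁻¹' Iic (n : ℝ) := fun a b hab =>
    preimage_mono (Iic_subset_Iic.2 (by exact_mod_cast hab))
  have htend : Tendsto (fun n : ℕ => ν (V ⁻¹' Iic (n : ℝ))) atTop (𝓝 1) := by
    have := tendsto_measure_iUnion_atTop (μ := ν) hmono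
    rwa [hU, measure_univ] at this
  have htendR : Tendsto (fun n : ℕ => distFun ν V (n : ℝ)) atTop (𝓝 1) := by
    have h1 : (1 : ℝ) = (1 : ℝ≥0∞).toReal := by simp
    rw [h1]
    exact (ENNReal.tendsto_toReal (by simp)).comp htend
  obtain ⟨n, hn⟩ := (htendR.eventually (eventually_gt_nhds hu)).exists
  exact ⟨n, hn.le⟩

lemma bddBelow_quantile_set (ν : Measure Ω) [IsProbabilityMeasure ν] {V : Ω → ℝ}
    (hV : Measurable V) {u : ℝ} (hu : 0 < u) :
    BddBelow {x : ℝ | u ≤ distFun ν V x} := by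
  have hI : (⋂ n : ℕ, V ⁻¹' Iic (-(n : ℝ))) = ∅ := by
    ext v
    simp only [mem_iInter, mem_preimage, mem_Iic, mem_empty_iff_false, iff_false]
    intro h
    obtain ⟨n, hn⟩ := exists_nat_gt (-(V v))
    exact absurd (h n) (not_le.2 (by linarith))
  have hanti : Antitone fun n : ℕ => V ⁻¹' Iic (-(n : ℝ)) := fun a b hab =>
    preimage_mono (Iic_subset_Iic.2 (by exact_mod_cast neg_le_neg (by exact_mod_cast hab)))
  have htend : Tendsto (fun n : ℕ => ν (V ⁻¹' Iic (-(n : ℝ)))) atTop (𝓝 0) := by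
    have := tendsto_measure_iInter_atTop (μ := ν)
      (fun n => (hV measurableSet_Iic).nullMeasurableSet) hanti ⟨0, measure_ne_top _ _⟩
    rwa [hI, measure_empty] at this
  have htendR : Tendsto (fun n : ℕ => distFun ν V (-(n : ℝ))) atTop (𝓝 0) := by
    have h0 : (0 : ℝ) = (0 : ℝ≥0∞).toReal := by simp
    rw [h0]
    exact (ENNReal.tendsto_toReal (by simp)).comp htend
  obtain ⟨n, hn⟩ := (htendR.eventually (eventually_lt_nhds hu)).exists
  refine ⟨-(n : ℝ), fun x hx => ?_⟩
  by_contra hlt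
  push_neg at hlt
  exact absurd (le_trans hx (distFun_mono ν V hlt.le)) (not_le.2 hn)


lemma quantile_le_of_le (ν : Measure Ω) [IsProbabilityMeasure ν] {V : Ω → ℝ}
    (hV : Measurable V) {u x : ℝ} (hu : 0 < u) (h : u ≤ distFun ν V x) :
    quantileFun (distFun ν V) u ≤ x :=
  csInf_le (bddBelow_quantile_set ν hV hu) h

/-- If `F x < u` would fail, i.e. from `x < quantile u` we get `F x < u`. -/
lemma distFun_lt_of_lt_quantile (ν : Measure Ω) [IsProbabilityMeasure ν] {V : Ω → ℝ}
    (hV : Measurable V) {u x : ℝ} (hu : 0 < u) (h : x < quantileFun (distFun ν V) u) :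
    distFun ν V x < u := by
  by_contra hge
  push_neg at hge
  exact absurd (quantile_le_of_le ν hV hu hge) (not_le.2 h)

/-- Right-continuity: if the quantile at `u` is `≤ x` then `u ≤ F x`. -/
lemma le_distFun_of_quantile_le (ν : Measure Ω) [IsProbabilityMeasure ν] {V : Ω → ℝ}
    (hV : Measurable V) {u x : ℝ} (hu0 : 0 ≤ u) (hu1 : u < 1)
    (h : quantileFun (distFun ν V) u ≤ x) :
    u ≤ distFun ν V x := by
  have hne : {y : ℝ | u ≤ distFun ν V y}.Nonempty := exists_distFun_ge ν hV hu1
  have hq : ∀ q : {q : ℚ // x < (q : ℝ)}, u ≤ distFun ν V (q : ℝ) := by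
    intro q
    obtain ⟨z, hz, hlt⟩ := exists_lt_of_csInf_lt hne (lt_of_le_of_lt h q.2)
    exact le_trans hz (distFun_mono ν V hlt.le)
  have hmeas : ENNReal.ofReal u ≤ ν (V ⁻¹' Iic x) := by
    rw [measure_Iic_eq_iInf ν hV x]
    exact le_iInf fun q => by
      rw [measure_eq_ofReal_distFun]
      exact ENNReal.ofReal_le_ofReal (hq q)
  calc u = (ENNReal.ofReal u).toReal := (ENNReal.toReal_ofReal hu0).symm
    _ ≤ (ν (V ⁻¹' Iic x)).toReal := ENNReal.toReal_mono (measure_ne_top _ _) hmeas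

lemma quantile_nonneg (ν : Measure Ω) [IsProbabilityMeasure ν] {V : Ω → ℝ}
    (hV : Measurable V) (hVpos : ∀ ω, 0 ≤ V ω) {u : ℝ} (hu : 0 < u) (hu1 : u < 1) :
    0 ≤ quantileFun (distFun ν V) u := by
  refine le_csInf (exists_distFun_ge ν hV hu1) (fun x hx => ?_)
  by_contra hlt
  push_neg at hlt
  have : V ⁻¹' Iic x = ∅ := by
    ext v
    simp only [mem_preimage, mem_Iic, mem_empty_iff_false, iff_false, not_le]
    exact lt_of_lt_of_le hlt (hVpos v)
  have h0 : distFun ν V x = 0 := by rw [distFun, this]; simp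
  have hx' : u ≤ distFun ν V x := hx
  rw [h0] at hx'
  exact absurd hx' (not_le.2 hu)

lemma quantile_monotoneOn (ν : Measure Ω) [IsProbabilityMeasure ν] {V : Ω → ℝ}
    (hV : Measurable V) :
    MonotoneOn (quantileFun (distFun ν V)) (Ioo (0:ℝ) 1) := by
  intro u hu u' hu' huu'
  exact csInf_le_csInf (bddBelow_quantile_set ν hV hu.1)
    (exists_distFun_ge ν hV hu'.2)
    (fun x hx => le_trans huu' hx)

lemma quantile_aemeasurable (ν : Measure Ω) [IsProbabilityMeasure ν] {V : Ω → ℝ}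
    (hV : Measurable V) :
    AEMeasurable (quantileFun (distFun ν V)) (volume.restrict (Ioo (0:ℝ) 1)) :=
  aemeasurable_restrict_of_monotoneOn measurableSet_Ioo (quantile_monotoneOn ν hV)

lemma quantile_map (ν : Measure Ω) [IsProbabilityMeasure ν] {V : Ω → ℝ} (hV : Measurable V) :
    Measure.map (quantileFun (distFun ν V)) (volume.restrict (Ioo (0:ℝ) 1)) = ν.map V := by
  have hqm := quantile_aemeasurable ν hV
  refine Measure.ext_of_Iic _ _ (fun x => ?_)
  rw [Measure.map_apply_of_aemeasurable hqm measurableSet_Iic,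
      Measure.map_apply hV measurableSet_Iic,
      Measure.restrict_apply' measurableSet_Ioo]
  have hset : quantileFun (distFun ν V) ⁻¹' Iic x ∩ Ioo 0 1
      = {u : ℝ | u ≤ distFun ν V x} ∩ Ioo (0:ℝ) 1 := by
    ext u
    simp only [mem_inter_iff, mem_preimage, mem_Iic, mem_Ioo, mem_setOf_eq]
    constructor
    · rintro ⟨h1, h2, h3⟩
      exact ⟨le_distFun_of_quantile_le ν hV h2.le h3 h1, h2, h3⟩
    · rintro ⟨h1, h2, h3⟩
      exact ⟨quantile_le_of_le ν hV h2 h1, h2, h3⟩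
  rw [hset]
  rcases lt_or_ge (distFun ν V x) 1 with hlt | hge
  · have h2 : {u : ℝ | u ≤ distFun ν V x} ∩ Ioo (0:ℝ) 1 = Ioc 0 (distFun ν V x) := by
      ext u
      simp only [mem_inter_iff, mem_setOf_eq, mem_Ioo, mem_Ioc]
      constructor
      · rintro ⟨h1, h2, _⟩; exact ⟨h2, h1⟩
      · rintro ⟨h1, h2⟩; exact ⟨h2, h1, lt_of_le_of_lt h2 hlt⟩
    rw [h2, Real.volume_Ioc, measure_eq_ofReal_distFun]
    simp
  · have hFx : distFun ν V x = 1 := le_antisymm (distFun_le_one ν V x) hge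
    have h2 : {u : ℝ | u ≤ distFun ν V x} ∩ Ioo (0:ℝ) 1 = Ioo (0:ℝ) 1 := by
      ext u
      simp only [mem_inter_iff, mem_setOf_eq, mem_Ioo, hFx]
      exact ⟨fun h => h.2, fun h => ⟨h.2.le, h⟩⟩
    rw [h2, Real.volume_Ioo, measure_eq_ofReal_distFun, hFx]
    simp

lemma quantile_integrableOn (ν : Measure Ω) [IsProbabilityMeasure ν] {V : Ω → ℝ}
    (hV : Measurable V) (hVi : Integrable V ν) :
    IntegrableOn (quantileFun (distFun ν V)) (Ioo (0:ℝ) 1) := by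
  have hqm := quantile_aemeasurable ν hV
  have h1 : Integrable (id : ℝ → ℝ) (ν.map V) := by
    rw [integrable_map_measure aestronglyMeasurable_id hV.aemeasurable]
    simpa using hVi
  rw [← quantile_map ν hV] at h1
  have h2 := (integrable_map_measure aestronglyMeasurable_id hqm).1 h1
  simpa [Function.comp, IntegrableOn] using h2


section Kernel

variable {Ω : Type*} {m m₁ : MeasurableSpace Ω} [mΩ : MeasurableSpace Ω]
  [StandardBorelSpace Ω] [Nonempty Ω] (μ : Measure Ω) [IsProbabilityMeasure μ]

lemma measure_inter_of_compl_null {α : Type*} [MeasurableSpace α] {ν : Measure α}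
    {E X : Set α} (hE : ν Eᶜ = 0) : ν (X ∩ E) = ν X := by
  refine le_antisymm (measure_mono inter_subset_left) ?_
  calc ν X ≤ ν ((X ∩ E) ∪ Eᶜ) := measure_mono (fun x hx => by
        by_cases h : x ∈ E
        · exact Or.inl ⟨hx, h⟩
        · exact Or.inr h)
    _ ≤ ν (X ∩ E) + ν Eᶜ := measure_union_le _ _
    _ = ν (X ∩ E) := by rw [hE, add_zero]

lemma condexpKernel_indep_event (hm : m ≤ mΩ) (hle₁ : m₁ ≤ mΩ) (hindep : Indep m₁ m μ)
    {s : Set Ω} (hsm₁ : MeasurableSet[m₁] s) :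
    ∀ᵐ ω ∂μ, ((condExpKernel μ m ω) s).toReal = (μ s).toReal := by
  have hs : MeasurableSet s := hle₁ _ hsm₁
  have h1 := condExpKernel_ae_eq_condExp (μ := μ) hm hs
  have hsm : StronglyMeasurable[m₁] (s.indicator (fun _ => (1:ℝ))) :=
    stronglyMeasurable_const.indicator hsm₁
  have h2 := condExp_indep_eq hle₁ hm hsm hindep
  filter_upwards [h1, h2] with ω hω1 hω2
  change (condExpKernel μ m ω).real s = _
  rw [hω1, hω2]
  exact integral_indicator_one hs

lemma condexpKernel_self_event (hm : m ≤ mΩ) {s : Set Ω} (hsm : MeasurableSet[m] s) :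
    ∀ᵐ ω ∂μ, ((condExpKernel μ m ω) s).toReal = s.indicator (fun _ => (1:ℝ)) ω := by
  have h1 := condExpKernel_ae_eq_condExp (μ := μ) hm (hm _ hsm)
  have h2 : μ[s.indicator (fun _ => (1:ℝ))|m] = s.indicator (fun _ => (1:ℝ)) :=
    condExp_of_stronglyMeasurable hm (stronglyMeasurable_const.indicator hsm)
      ((integrable_const (1:ℝ)).indicator (hm _ hsm))
  filter_upwards [h1] with ω hω
  change (condExpKernel μ m ω).real s = _
  rw [hω, h2]

lemma condexpKernel_null (hm : m ≤ mΩ) {s : Set Ω} (hs : MeasurableSet s) (h0 : μ s = 0) :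
    ∀ᵐ ω ∂μ, (condExpKernel μ m ω) s = 0 := by
  have h1 := condExpKernel_ae_eq_condExp (μ := μ) hm hs
  have hind : s.indicator (fun _ => (1:ℝ)) =ᵐ[μ] 0 := by
    have hae : ∀ᵐ ω ∂μ, ω ∉ s := measure_eq_zero_iff_ae_notMem.mp h0
    filter_upwards [hae] with ω hω
    simp [Set.indicator_of_notMem hω]
  have h2 : μ[s.indicator (fun _ => (1:ℝ))|m] =ᵐ[μ] 0 := by
    calc μ[s.indicator (fun _ => (1:ℝ))|m] =ᵐ[μ] μ[(0 : Ω → ℝ)|m] := condExp_congr_ae hind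
      _ = 0 := condExp_zero
  filter_upwards [h1, h2] with ω hω1 hω2
  have h3 : ((condExpKernel μ m ω) s).toReal = 0 := by
    change (condExpKernel μ m ω).real s = _
    rw [hω1, hω2]; rfl
  rcases (ENNReal.toReal_eq_zero_iff _).1 h3 with h | h
  · exact h
  · exact absurd h (measure_ne_top _ _)

lemma condexpKernel_distFun (hm : m ≤ mΩ) (hle₁ : m₁ ≤ mΩ) (hindep : Indep m₁ m μ)
    {V : Ω → ℝ} (hVm₁ : Measurable[m₁] V) :
    ∀ᵐ ω ∂μ, ∀ x : ℝ, distFun (condExpKernel μ m ω) V x = distFun μ V x := by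
  have hV : Measurable V := hVm₁.mono hle₁ le_rfl
  have hae : ∀ᵐ ω ∂μ, ∀ q : ℚ, distFun (condExpKernel μ m ω) V q = distFun μ V q := by
    rw [ae_all_iff]
    intro q
    have hmem : MeasurableSet[m₁] (V ⁻¹' Iic (q : ℝ)) := hVm₁ measurableSet_Iic
    filter_upwards [condexpKernel_indep_event μ hm hle₁ hindep hmem] with ω hω
    exact hω
  filter_upwards [hae] with ω hω x
  exact AVaRAux.distFun_ext_of_rat _ _ hV hV hω x

lemma condexpKernel_eq_self_ae (hm : m ≤ mΩ) {S : Ω → ℝ} (hSm : Measurable[m] S) :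
    ∀ᵐ ω ∂μ, (condExpKernel μ m ω) {x | S x = S ω}ᶜ = 0 := by
  have hS : Measurable S := hSm.mono hm le_rfl
  have hq : ∀ᵐ ω ∂μ, ∀ q : ℚ, ((condExpKernel μ m ω) (S ⁻¹' Iic (q : ℝ))).toReal
      = (S ⁻¹' Iic (q : ℝ)).indicator (fun _ => (1:ℝ)) ω := by
    rw [ae_all_iff]
    intro q
    exact condexpKernel_self_event μ hm (hSm measurableSet_Iic)
  filter_upwards [hq] with ω hω
  set κ := condExpKernel μ m ω with hκ
  set s0 := S ω with hs0
  have hκq : ∀ q : ℚ, κ (S ⁻¹' Iic (q : ℝ))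
      = ENNReal.ofReal ((S ⁻¹' Iic (q : ℝ)).indicator (fun _ => (1:ℝ)) ω) := by
    intro q
    rw [← hω q, ENNReal.ofReal_toReal (measure_ne_top _ _)]
  -- κ {S ≤ s} = 1
  have hA : κ (S ⁻¹' Iic s0) = 1 := by
    rw [AVaRAux.measure_Iic_eq_iInf κ hS s0]
    have : ∀ q : {q : ℚ // s0 < (q : ℝ)}, κ (S ⁻¹' Iic ((q : ℚ) : ℝ)) = 1 := by
      intro q
      rw [hκq q.1]
      have : ω ∈ S ⁻¹' Iic ((q.1 : ℚ) : ℝ) := le_of_lt q.2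
      simp [Set.indicator_of_mem this]
    have hne : Nonempty {q : ℚ // s0 < (q : ℝ)} := by
      obtain ⟨q, hq'⟩ := exists_rat_gt s0
      exact ⟨⟨q, hq'⟩⟩
    rw [iInf_congr this]
    simp
  have hAc : κ (S ⁻¹' Iic s0)ᶜ = 0 := by
    have hcompl := measure_compl (μ := κ) (s := S ⁻¹' Iic s0) (hS measurableSet_Iic)
      (measure_ne_top _ _)
    rw [hA, measure_univ] at hcompl
    simpa using hcompl
  -- κ {S < s0} = 0
  have hB : κ {x | S x < s0} = 0 := by
    have hBeq : {x | S x < s0} = ⋃ q : {q : ℚ // (q : ℝ) < s0}, S ⁻¹' Iic ((q : ℚ) : ℝ) := by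
      ext x
      simp only [mem_setOf_eq, mem_iUnion, mem_preimage, mem_Iic]
      constructor
      · intro h
        obtain ⟨q, hq1, hq2⟩ := exists_rat_btwn h
        exact ⟨⟨q, hq2⟩, hq1.le⟩
      · rintro ⟨q, hq'⟩
        exact lt_of_le_of_lt hq' q.2
    rw [hBeq]
    refine measure_iUnion_null (fun q => ?_)
    rw [hκq q.1]
    have : ω ∉ S ⁻¹' Iic ((q.1 : ℚ) : ℝ) := by
      simp only [mem_preimage, mem_Iic, not_le]
      exact q.2
    simp [Set.indicator_of_notMem this]
  -- combine
  have hsub : {x | S x = s0}ᶜ ⊆ {x | S x < s0} ∪ (S ⁻¹' Iic s0)ᶜ := by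
    intro x hx
    simp only [mem_compl_iff, mem_setOf_eq] at hx
    rcases lt_trichotomy (S x) s0 with h | h | h
    · exact Or.inl h
    · exact absurd h hx
    · exact Or.inr (by simp only [mem_compl_iff, mem_preimage, mem_Iic, not_le]; exact h)
  refine le_antisymm ?_ zero_le
  calc κ {x | S x = s0}ᶜ ≤ κ ({x | S x < s0} ∪ (S ⁻¹' Iic s0)ᶜ) := measure_mono hsub
    _ ≤ κ {x | S x < s0} + κ (S ⁻¹' Iic s0)ᶜ := measure_union_le _ _
    _ = 0 := by rw [hB, hAc, add_zero]

end Kernel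

section PerOmega

variable {X : Type*} [MeasurableSpace X] {κ : Measure X} [IsFiniteMeasure κ]
  {V Y : X → ℝ} {E N : Set X} {F : ℝ → ℝ} {u : ℝ}

lemma toReal_le_of_subset {A B C : Set X} (h : A ⊆ B ∪ C) (hC : κ C = 0) :
    (κ A).toReal ≤ (κ B).toReal := by
  refine ENNReal.toReal_mono (measure_ne_top _ _) ?_
  calc κ A ≤ κ (B ∪ C) := measure_mono h
    _ ≤ κ B + κ C := measure_union_le _ _
    _ = κ B := by rw [hC, add_zero]

lemma VaR_set_lower (hE : κ Eᶜ = 0) (hN : κ N = 0)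
    (hF : ∀ x : ℝ, (κ (V ⁻¹' Iic x)).toReal = F x) {β : ℝ}
    (hlow : ∀ mm : ℝ, mm < β → ∃ y : ℝ, F y < u ∧ (Y ⁻¹' Iic mm ∩ E) ⊆ V ⁻¹' Iic y ∪ N) :
    ∀ mm ∈ {m : ℝ | u ≤ (κ (Y ⁻¹' Iic m)).toReal}, β ≤ mm := by
  intro mm hmm
  by_contra hlt
  push_neg at hlt
  obtain ⟨y, hFy, hsub⟩ := hlow mm hlt
  have h1 : (κ (Y ⁻¹' Iic mm)).toReal = (κ (Y ⁻¹' Iic mm ∩ E)).toReal := by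
    rw [measure_inter_of_compl_null hE]
  have h2 : (κ (Y ⁻¹' Iic mm ∩ E)).toReal ≤ (κ (V ⁻¹' Iic y)).toReal :=
    toReal_le_of_subset hsub hN
  have := hmm
  simp only [mem_setOf_eq] at this
  rw [h1] at this
  exact absurd (le_trans this (h2.trans_eq (hF y))) (not_le.2 hFy)

lemma VaR_set_upper_mem (hE : κ Eᶜ = 0) (hN : κ N = 0)
    (hF : ∀ x : ℝ, (κ (V ⁻¹' Iic x)).toReal = F x) {c₀ c₁ : ℝ}
    (hup : ∀ y : ℝ, (V ⁻¹' Iic y ∩ E) \ N ⊆ Y ⁻¹' Iic (c₀ + c₁ * y)) :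
    ∀ y : ℝ, u ≤ F y → u ≤ (κ (Y ⁻¹' Iic (c₀ + c₁ * y))).toReal := by
  intro y hy
  have hsub : V ⁻¹' Iic y ⊆ Y ⁻¹' Iic (c₀ + c₁ * y) ∪ (Eᶜ ∪ N) := by
    intro x hx
    by_cases hxE : x ∈ E
    · by_cases hxN : x ∈ N
      · exact Or.inr (Or.inr hxN)
      · exact Or.inl (hup y ⟨⟨hx, hxE⟩, hxN⟩)
    · exact Or.inr (Or.inl hxE)
  have h0 : κ (Eᶜ ∪ N) = 0 := by
    refine le_antisymm ?_ zero_le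
    calc κ (Eᶜ ∪ N) ≤ κ Eᶜ + κ N := measure_union_le _ _
      _ = 0 := by rw [hE, hN, add_zero]
  calc u ≤ F y := hy
    _ = (κ (V ⁻¹' Iic y)).toReal := (hF y).symm
    _ ≤ (κ (Y ⁻¹' Iic (c₀ + c₁ * y))).toReal := toReal_le_of_subset hsub h0

end PerOmega

lemma le_affine_csInf {Sy : Set ℝ} (hne : Sy.Nonempty) {c₀ c₁ r : ℝ} (hc₁ : 0 < c₁)
    (h : ∀ y ∈ Sy, r ≤ c₀ + c₁ * y) : r ≤ c₀ + c₁ * sInf Sy := by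
  have h1 : (r - c₀) / c₁ ≤ sInf Sy := by
    refine le_csInf hne (fun y hy => ?_)
    rw [div_le_iff₀ hc₁]
    have := h y hy
    nlinarith
  have h2 := mul_le_mul_of_nonneg_left h1 hc₁.le
  rw [mul_div_cancel₀ _ hc₁.ne'] at h2
  linarith

lemma distFun_neg_of_nonneg {Ω : Type*} [MeasurableSpace Ω] (ν : Measure Ω) {V : Ω → ℝ}
    (hVpos : ∀ x, 0 ≤ V x) {y : ℝ} (hy : y < 0) : distFun ν V y = 0 := by
  have : V ⁻¹' Iic y = ∅ := by
    ext x
    simp only [mem_preimage, mem_Iic, mem_empty_iff_false, iff_false, not_le]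
    exact lt_of_lt_of_le hy (hVpos x)
  rw [distFun, this]
  simp

lemma distFun_map_eq {Ω Ω' : Type*} [MeasurableSpace Ω] [MeasurableSpace Ω']
    {μ : Measure Ω} {μ' : Measure Ω'} {W : Ω → ℝ} {W' : Ω' → ℝ}
    (hW : Measurable W) (hW' : Measurable W') (hmap : μ.map W = μ'.map W') :
    distFun μ W = distFun μ' W' := by
  funext x
  rw [distFun, distFun, ← Measure.map_apply hW measurableSet_Iic,
    ← Measure.map_apply hW' measurableSet_Iic, hmap]

lemma distFun_sq_map_eq {Ω Ω' : Type*} [MeasurableSpace Ω] [MeasurableSpace Ω']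
    {μ : Measure Ω} {μ' : Measure Ω'} {W : Ω → ℝ} {W' : Ω' → ℝ}
    (hW : Measurable W) (hW' : Measurable W') (hmap : μ.map W = μ'.map W') :
    distFun μ (fun x => W x ^ 2) = distFun μ' (fun x => W' x ^ 2) := by
  have hsq : Measurable fun z : ℝ => z ^ 2 := measurable_id.pow_const 2
  refine distFun_map_eq (hsq.comp hW) (hsq.comp hW') ?_
  show μ.map ((fun z : ℝ => z ^ 2) ∘ W) = μ'.map ((fun z : ℝ => z ^ 2) ∘ W')
  rw [← Measure.map_map hsq hW, ← Measure.map_map hsq hW', hmap]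

section Work

variable {Ω : Type*} {m : MeasurableSpace Ω} [mΩ : MeasurableSpace Ω]
  [StandardBorelSpace Ω] [Nonempty Ω]

/-- The conditional VaR of `S·W` given `m`, where `S` is `m`-measurable positive and `W`
is independent of `m`, equals `S ω` times the quantile of `W`. -/
lemma base_eq (μ : Measure Ω) [IsProbabilityMeasure μ] (hm : m ≤ mΩ)
    {W S : Ω → ℝ} (hW : Measurable W) (hSm : Measurable[m] S) (hSpos : ∀ x, 0 < S x)
    (hindep : Indep (MeasurableSpace.comap W Real.measurableSpace) m μ)
    {α : ℝ} (hα0 : 0 < α) (hα1 : α < 1) :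
    ∀ᵐ ω ∂μ, (1 - α)⁻¹ * ∫ u in α..(1:ℝ), condVaR m μ u (fun x => S x * W x) ω
      = ((1 - α)⁻¹ * ∫ u in α..(1:ℝ), quantileFun (distFun μ W) u) * S ω := by
  classical
  have hWm₁ : Measurable[MeasurableSpace.comap W Real.measurableSpace] W :=
    Measurable.of_comap_le le_rfl
  have hle₁ : MeasurableSpace.comap W Real.measurableSpace ≤ mΩ := hW.comap_le
  have hK1 := condexpKernel_distFun μ hm hle₁ hindep hWm₁
  have hK2 := condexpKernel_eq_self_ae μ hm hSm
  filter_upwards [hK1, hK2] with ω hω1 hω2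
  have hspos : 0 < S ω := hSpos ω
  have hF : ∀ x : ℝ, ((condExpKernel μ m ω) (W ⁻¹' Iic x)).toReal = distFun μ W x :=
    fun x => hω1 x
  have hN0 : (condExpKernel μ m ω) (∅ : Set Ω) = 0 := measure_empty
  -- upper membership
  have hupincl : ∀ u : ℝ, ∀ y : ℝ,
      (W ⁻¹' Iic y ∩ {x | S x = S ω}) \ (∅ : Set Ω)
        ⊆ (fun x => S x * W x) ⁻¹' Iic (0 + S ω * y) := by
    intro u y x hx
    obtain ⟨⟨hxy, hxE⟩, -⟩ := hx
    simp only [mem_preimage, mem_Iic] at hxy ⊢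
    have hSx : S x = S ω := hxE
    rw [hSx, zero_add]
    exact mul_le_mul_of_nonneg_left hxy hspos.le
  have hconds : ∀ u : ℝ, α ≤ u → u < 1 →
      condVaR m μ u (fun x => S x * W x) ω = S ω * quantileFun (distFun μ W) u := by
    intro u hu1 hu2
    have hu0 : 0 < u := lt_of_lt_of_le hα0 hu1
    have hmem := VaR_set_upper_mem (u := u) hω2 hN0 hF (hupincl u)
    have hlow' := VaR_set_lower (u := u) (Y := fun x => S x * W x) (β := S ω * quantileFun (distFun μ W) u)
      hω2 hN0 hF ?hlowhyp
    case hlowhyp =>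
      intro mm hmm
      refine ⟨mm / S ω, ?_, ?_⟩
      · refine distFun_lt_of_lt_quantile μ hW hu0 ?_
        rw [div_lt_iff₀ hspos]
        linarith [hmm]
      · rintro x ⟨hxm, hxE⟩
        left
        simp only [mem_preimage, mem_Iic] at hxm ⊢
        have hSx : S x = S ω := hxE
        rw [le_div_iff₀ hspos]
        calc W x * S ω = S x * W x := by rw [hSx]; ring
          _ ≤ mm := hxm
    have hSetq : {y : ℝ | u ≤ distFun μ W y}.Nonempty := exists_distFun_ge μ hW hu2
    have hne : {mmm : ℝ | u ≤ ((condExpKernel μ m ω)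
        ((fun x => S x * W x) ⁻¹' Iic mmm)).toReal}.Nonempty := by
      obtain ⟨y0, hy0⟩ := hSetq
      exact ⟨0 + S ω * y0, hmem y0 hy0⟩
    have hbdd : BddBelow {mmm : ℝ | u ≤ ((condExpKernel μ m ω)
        ((fun x => S x * W x) ⁻¹' Iic mmm)).toReal} := ⟨_, hlow'⟩
    have hcv : condVaR m μ u (fun x => S x * W x) ω
        = sInf {mmm : ℝ | u ≤ ((condExpKernel μ m ω)
            ((fun x => S x * W x) ⁻¹' Iic mmm)).toReal} := rfl
    rw [hcv]
    refine le_antisymm ?_ (le_csInf hne hlow')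
    have h1 : ∀ y ∈ {y : ℝ | u ≤ distFun μ W y},
        sInf {mmm : ℝ | u ≤ ((condExpKernel μ m ω)
          ((fun x => S x * W x) ⁻¹' Iic mmm)).toReal} ≤ 0 + S ω * y :=
      fun y hy => csInf_le hbdd (hmem y hy)
    have h2 := le_affine_csInf hSetq hspos (r := sInf {mmm : ℝ | u ≤ ((condExpKernel μ m ω)
      ((fun x => S x * W x) ⁻¹' Iic mmm)).toReal}) (fun y hy => h1 y hy)
    calc sInf _ ≤ 0 + S ω * sInf {y : ℝ | u ≤ distFun μ W y} := h2
      _ = S ω * quantileFun (distFun μ W) u := by rw [zero_add]; rfl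
  have hcongr : ∫ u in α..(1:ℝ), condVaR m μ u (fun x => S x * W x) ω
      = ∫ u in α..(1:ℝ), S ω * quantileFun (distFun μ W) u := by
    refine intervalIntegral.integral_congr_ae ?_
    have h1 : ∀ᵐ u ∂(volume : Measure ℝ), u ≠ 1 := by
      have := measure_eq_zero_iff_ae_notMem.mp ((Real.volume_singleton (a := (1:ℝ))))
      filter_upwards [this] with u hu
      simpa [mem_singleton_iff] using hu
    filter_upwards [h1] with u hu hmem'
    rw [uIoc_of_le hα1.le] at hmem'
    exact hconds u hmem'.1.le (lt_of_le_of_ne hmem'.2 hu)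
  rw [hcongr, intervalIntegral.integral_const_mul]
  ring

set_option maxHeartbeats 1000000 in
/-- One backward-induction step. -/
lemma step_bound (μ : Measure Ω) [IsProbabilityMeasure μ] (hm : m ≤ mΩ)
    {W S Y : Ω → ℝ} (hW : Measurable W) (hSm : Measurable[m] S) (hSpos : ∀ x, 0 < S x)
    (hindep : Indep (MeasurableSpace.comap W Real.measurableSpace) m μ)
    {a₀ a₁ b α Cl A B : ℝ} (ha₀ : 0 < a₀) (ha₁ : 0 < a₁) (hb : 0 < b)
    (hα0 : 0 < α) (hα1 : α < 1) (hCl : 0 < Cl) (hA : 0 ≤ A) (hB : 0 < B)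
    (hWsqint : Integrable (fun x => W x ^ 2) μ)
    (hYlow : ∀ᵐ x ∂μ, Cl * (S x * Real.sqrt (a₁ * W x ^ 2 + b)) ≤ Y x)
    (hYup : ∀ᵐ x ∂μ, Y x ≤ A + B * (a₀ + a₁ * S x ^ 2 * W x ^ 2 + b * S x ^ 2)) :
    ∀ᵐ ω ∂μ,
      Cl * ((1 - α)⁻¹ * ∫ y in α..(1:ℝ),
          Real.sqrt (a₁ * quantileFun (distFun μ (fun x => W x ^ 2)) y + b)) * S ω
        ≤ (1 - α)⁻¹ * ∫ u in α..(1:ℝ), condVaR m μ u Y ω ∧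
      (1 - α)⁻¹ * ∫ u in α..(1:ℝ), condVaR m μ u Y ω
        ≤ (A + B * a₀) + (B * (b + a₁ * ((1 - α)⁻¹ * ∫ u in α..(1:ℝ),
            quantileFun (distFun μ (fun x => W x ^ 2)) u))) * S ω ^ 2 := by
  classical
  have h1α : (0:ℝ) < 1 - α := by linarith
  have hsqm : Measurable fun z : ℝ => z ^ 2 := measurable_id.pow_const 2
  have hV : Measurable (fun x => W x ^ 2) := hsqm.comp hW
  have hVnonneg : ∀ x, 0 ≤ W x ^ 2 := fun x => sq_nonneg _
  set q₂ : ℝ → ℝ := quantileFun (distFun μ (fun x => W x ^ 2)) with hq₂def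
  clear_value q₂
  -- q₂ facts
  have hq₂sInf : ∀ u : ℝ, q₂ u = sInf {y : ℝ | u ≤ distFun μ (fun x => W x ^ 2) y} := by
    intro u
    rw [hq₂def]
    rfl
  have hq₂On : IntegrableOn q₂ (Ioo (0:ℝ) 1) volume := by
    rw [hq₂def]
    exact quantile_integrableOn μ hV hWsqint
  have hsub01 : Ioo α (1:ℝ) ⊆ Ioo (0:ℝ) 1 := fun x hx => ⟨lt_trans hα0 hx.1, hx.2⟩
  have hq₂ae : AEMeasurable q₂ (volume.restrict (Ioo α 1)) := by
    rw [hq₂def]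
    exact (quantile_aemeasurable μ hV).mono_measure (Measure.restrict_mono hsub01 le_rfl)
  have hq₂nonneg : ∀ u : ℝ, α ≤ u → u < 1 → 0 ≤ q₂ u := by
    intro u h1 h2
    rw [hq₂def]
    exact quantile_nonneg μ hV hVnonneg (lt_of_lt_of_le hα0 h1) h2
  have hq₂int : IntervalIntegrable q₂ volume α 1 := by
    rw [intervalIntegrable_iff_integrableOn_Ioo_of_le hα1.le]
    exact hq₂On.mono_set hsub01
  have hae_ne1 : ∀ᵐ u ∂(volume.restrict (Icc α (1:ℝ))), u ≠ 1 := by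
    refine ae_restrict_of_ae ?_
    have := measure_eq_zero_iff_ae_notMem.mp (Real.volume_singleton (a := (1:ℝ)))
    filter_upwards [this] with u hu
    simpa [mem_singleton_iff] using hu
  have hae_gtα : ∀ᵐ u ∂(volume.restrict (Icc α (1:ℝ))), α ≤ u ∧ u ≤ 1 := by
    filter_upwards [ae_restrict_mem measurableSet_Icc] with u hu
    exact ⟨hu.1, hu.2⟩
  have hsqrtint : IntervalIntegrable (fun y => Real.sqrt (a₁ * q₂ y + b)) volume α 1 := by
    rw [intervalIntegrable_iff_integrableOn_Ioo_of_le hα1.le]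
    refine Integrable.mono' (g := fun y => 1 + (a₁ * q₂ y + b))
      (((integrable_const (1:ℝ)).add (((hq₂On.mono_set hsub01).const_mul a₁).add
        (integrable_const b))).congr (by
          refine ae_of_all _ (fun y => ?_)
          simp only [Pi.add_apply]
          try ring))
      (((Real.continuous_sqrt.comp (by continuity :
          Continuous fun t : ℝ => a₁ * t + b)).measurable.comp_aemeasurable
            hq₂ae).aestronglyMeasurable) ?_
    filter_upwards [ae_restrict_mem measurableSet_Ioo] with y hy
    have h0 : 0 ≤ a₁ * q₂ y + b := by nlinarith [hq₂nonneg y hy.1.le hy.2, ha₁.le, hb.le]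
    rw [Real.norm_eq_abs, abs_of_nonneg (Real.sqrt_nonneg _)]
    nlinarith [Real.sq_sqrt h0, Real.sqrt_nonneg (a₁ * q₂ y + b),
      sq_nonneg (Real.sqrt (a₁ * q₂ y + b) - 1)]
  -- exceptional null set
  obtain ⟨N, hNsub, hNmeas, hNnull⟩ := exists_measurable_superset_of_null
    (ae_iff.mp (hYlow.and hYup))
  have hgood : ∀ x, x ∉ N → Cl * (S x * Real.sqrt (a₁ * W x ^ 2 + b)) ≤ Y x ∧
      Y x ≤ A + B * (a₀ + a₁ * S x ^ 2 * W x ^ 2 + b * S x ^ 2) := by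
    intro x hxN
    by_contra h
    exact hxN (hNsub h)
  -- kernel facts
  have hWm₁ : Measurable[MeasurableSpace.comap W Real.measurableSpace] W :=
    Measurable.of_comap_le le_rfl
  have hVm₁ : Measurable[MeasurableSpace.comap W Real.measurableSpace] (fun x => W x ^ 2) :=
    hsqm.comp hWm₁
  have hle₁ : MeasurableSpace.comap W Real.measurableSpace ≤ mΩ := hW.comap_le
  have hK1 := condexpKernel_distFun μ hm hle₁ hindep hVm₁
  have hK2 := condexpKernel_eq_self_ae μ hm hSm
  have hK3 := condexpKernel_null μ hm hNmeas hNnull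
  filter_upwards [hK1, hK2, hK3] with ω hω1 hω2 hω3
  have hspos : 0 < S ω := hSpos ω
  set s : ℝ := S ω with hs
  set c : ℝ := Cl * s with hc
  have hcpos : 0 < c := mul_pos hCl hspos
  set c₀ : ℝ := A + B * a₀ + B * b * s ^ 2 with hc₀
  set c₁ : ℝ := B * a₁ * s ^ 2 with hc₁
  clear_value s c c₀ c₁
  have hc₀0 : 0 ≤ c₀ := by
    rw [hc₀]
    have h1 : 0 ≤ B * a₀ := mul_nonneg hB.le ha₀.le
    have h2 : 0 ≤ B * b * s ^ 2 := mul_nonneg (mul_nonneg hB.le hb.le) (sq_nonneg s)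
    linarith
  have hc₁pos : 0 < c₁ := by rw [hc₁]; exact mul_pos (mul_pos hB ha₁) (pow_pos hspos 2)
  have hF : ∀ x : ℝ, ((condExpKernel μ m ω) ((fun x => W x ^ 2) ⁻¹' Iic x)).toReal
      = distFun μ (fun x => W x ^ 2) x := fun x => hω1 x
  -- upper inclusion
  have hupincl : ∀ y : ℝ, ((fun x => W x ^ 2) ⁻¹' Iic y ∩ {x | S x = s}) \ N
      ⊆ Y ⁻¹' Iic (c₀ + c₁ * y) := by
    rintro y x ⟨⟨hxy, hxE⟩, hxN⟩
    obtain ⟨-, hup⟩ := hgood x hxN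
    simp only [mem_preimage, mem_Iic] at hxy ⊢
    have hSx : S x = s := hxE
    calc Y x ≤ A + B * (a₀ + a₁ * S x ^ 2 * W x ^ 2 + b * S x ^ 2) := hup
      _ = c₀ + c₁ * (W x ^ 2) := by rw [hSx, hc₀, hc₁]; ring
      _ ≤ c₀ + c₁ * y := by nlinarith [hxy]
  have hmem : ∀ u : ℝ, ∀ y : ℝ, u ≤ distFun μ (fun x => W x ^ 2) y →
      u ≤ ((condExpKernel μ m ω) (Y ⁻¹' Iic (c₀ + c₁ * y))).toReal :=
    fun u => VaR_set_upper_mem (u := u) hω2 hω3 hF hupincl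
  -- lower hypothesis
  have hlowhyp : ∀ u : ℝ, α ≤ u → u < 1 → ∀ mm : ℝ, mm < c * Real.sqrt (a₁ * q₂ u + b) →
      ∃ y : ℝ, distFun μ (fun x => W x ^ 2) y < u ∧
        (Y ⁻¹' Iic mm ∩ {x | S x = s}) ⊆ (fun x => W x ^ 2) ⁻¹' Iic y ∪ N := by
    intro u hu1 hu2 mm hmm
    have hu0 : 0 < u := lt_of_lt_of_le hα0 hu1
    have hq₂u : 0 ≤ q₂ u := hq₂nonneg u hu1 hu2
    rcases lt_or_ge mm (c * Real.sqrt b) with hsmall | hbig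
    · refine ⟨-1, ?_, ?_⟩
      · rw [distFun_neg_of_nonneg μ hVnonneg (by norm_num)]
        exact hu0
      · rintro x ⟨hxm, hxE⟩
        by_cases hxN : x ∈ N
        · exact Or.inr hxN
        · exfalso
          obtain ⟨hlo, -⟩ := hgood x hxN
          have hSx : S x = s := hxE
          simp only [mem_preimage, mem_Iic] at hxm
          have h1 : c * Real.sqrt b ≤ Y x := by
            have hsq : Real.sqrt b ≤ Real.sqrt (a₁ * W x ^ 2 + b) :=
              Real.sqrt_le_sqrt (by nlinarith [hVnonneg x])
            calc c * Real.sqrt b = Cl * (s * Real.sqrt b) := by rw [hc]; ring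
              _ ≤ Cl * (s * Real.sqrt (a₁ * W x ^ 2 + b)) := by nlinarith [hspos]
              _ = Cl * (S x * Real.sqrt (a₁ * W x ^ 2 + b)) := by rw [hSx]
              _ ≤ Y x := hlo
          linarith
    · have hmm0 : 0 ≤ mm := le_trans (mul_nonneg hcpos.le (Real.sqrt_nonneg b)) hbig
      refine ⟨((mm / c) ^ 2 - b) / a₁, ?_, ?_⟩
      · have h1 : mm / c < Real.sqrt (a₁ * q₂ u + b) := by
          rw [div_lt_iff₀ hcpos]
          linarith [hmm]
        have h2 : (mm / c) ^ 2 < a₁ * q₂ u + b := by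
          nlinarith [Real.sq_sqrt (show (0:ℝ) ≤ a₁ * q₂ u + b by nlinarith),
            Real.sqrt_nonneg (a₁ * q₂ u + b), div_nonneg hmm0 hcpos.le]
        have hylt : ((mm / c) ^ 2 - b) / a₁ < q₂ u := by
          rw [div_lt_iff₀ ha₁]
          nlinarith
        rw [hq₂sInf u] at hylt
        exact distFun_lt_of_lt_quantile μ hV hu0 hylt
      · rintro x ⟨hxm, hxE⟩
        by_cases hxN : x ∈ N
        · exact Or.inr hxN
        · left
          obtain ⟨hlo, -⟩ := hgood x hxN
          have hSx : S x = s := hxE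
          simp only [mem_preimage, mem_Iic] at hxm ⊢
          have h1 : c * Real.sqrt (a₁ * W x ^ 2 + b) ≤ mm := by
            calc c * Real.sqrt (a₁ * W x ^ 2 + b)
                = Cl * (S x * Real.sqrt (a₁ * W x ^ 2 + b)) := by rw [hSx, hc]; ring
              _ ≤ Y x := hlo
              _ ≤ mm := hxm
          have h2 : Real.sqrt (a₁ * W x ^ 2 + b) ≤ mm / c := by
            rw [le_div_iff₀ hcpos]
            linarith
          have h3 : a₁ * W x ^ 2 + b ≤ (mm / c) ^ 2 := by
            nlinarith [Real.sq_sqrt (show (0:ℝ) ≤ a₁ * W x ^ 2 + b by nlinarith [hVnonneg x]),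
              Real.sqrt_nonneg (a₁ * W x ^ 2 + b), div_nonneg hmm0 hcpos.le]
          rw [le_div_iff₀ ha₁]
          nlinarith
  -- pointwise bounds on the conditional VaR
  have hconds : ∀ u : ℝ, α ≤ u → u < 1 →
      c * Real.sqrt (a₁ * q₂ u + b) ≤ condVaR m μ u Y ω ∧
        condVaR m μ u Y ω ≤ c₀ + c₁ * q₂ u := by
    intro u hu1 hu2
    have hu0 : 0 < u := lt_of_lt_of_le hα0 hu1
    have hlow' := VaR_set_lower (u := u) (Y := Y) (β := c * Real.sqrt (a₁ * q₂ u + b))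
      hω2 hω3 hF (hlowhyp u hu1 hu2)
    have hSetq : {y : ℝ | u ≤ distFun μ (fun x => W x ^ 2) y}.Nonempty :=
      exists_distFun_ge μ hV hu2
    have hne : {mmm : ℝ | u ≤ ((condExpKernel μ m ω) (Y ⁻¹' Iic mmm)).toReal}.Nonempty := by
      obtain ⟨y0, hy0⟩ := hSetq
      exact ⟨c₀ + c₁ * y0, hmem u y0 hy0⟩
    have hbdd : BddBelow {mmm : ℝ | u ≤ ((condExpKernel μ m ω) (Y ⁻¹' Iic mmm)).toReal} :=
      ⟨_, hlow'⟩
    have hcv : condVaR m μ u Y ω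
        = sInf {mmm : ℝ | u ≤ ((condExpKernel μ m ω) (Y ⁻¹' Iic mmm)).toReal} := rfl
    constructor
    · rw [hcv]
      exact le_csInf hne hlow'
    · rw [hcv]
      have h2 := le_affine_csInf hSetq hc₁pos
        (r := sInf {mmm : ℝ | u ≤ ((condExpKernel μ m ω) (Y ⁻¹' Iic mmm)).toReal})
        (fun y hy => csInf_le hbdd (hmem u y hy))
      rw [hq₂sInf u]
      exact h2
  -- monotonicity & integrability of the VaR profile
  have hfmono : MonotoneOn (fun u => condVaR m μ u Y ω) (Ioo α 1) := by
    intro u hu u' hu' huu'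
    have hlow' := VaR_set_lower (u := u) (Y := Y)
      (β := c * Real.sqrt (a₁ * q₂ u + b)) hω2 hω3 hF (hlowhyp u hu.1.le hu.2)
    have hSetq : {y : ℝ | u' ≤ distFun μ (fun x => W x ^ 2) y}.Nonempty :=
      exists_distFun_ge μ hV hu'.2
    have hne : {mmm : ℝ | u' ≤ ((condExpKernel μ m ω) (Y ⁻¹' Iic mmm)).toReal}.Nonempty := by
      obtain ⟨y0, hy0⟩ := hSetq
      exact ⟨c₀ + c₁ * y0, hmem u' y0 hy0⟩
    exact csInf_le_csInf ⟨_, hlow'⟩ hne (fun mmm hmm => le_trans huu' hmm)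
  have hfint : IntervalIntegrable (fun u => condVaR m μ u Y ω) volume α 1 := by
    rw [intervalIntegrable_iff_integrableOn_Ioo_of_le hα1.le]
    refine Integrable.mono' (g := fun u => c₀ + c₁ * q₂ u)
      ((integrable_const c₀).add ((hq₂On.mono_set hsub01).const_mul c₁))
      (aemeasurable_restrict_of_monotoneOn measurableSet_Ioo hfmono).aestronglyMeasurable ?_
    filter_upwards [ae_restrict_mem measurableSet_Ioo] with u hu
    obtain ⟨h1, h2⟩ := hconds u hu.1.le hu.2
    rw [Real.norm_eq_abs, abs_of_nonneg (le_trans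
      (mul_nonneg hcpos.le (Real.sqrt_nonneg _)) h1)]
    exact h2
  -- integral bounds
  have hlowI : ∫ u in α..(1:ℝ), c * Real.sqrt (a₁ * q₂ u + b)
      ≤ ∫ u in α..(1:ℝ), condVaR m μ u Y ω := by
    refine intervalIntegral.integral_mono_ae_restrict hα1.le (hsqrtint.const_mul c) hfint ?_
    filter_upwards [hae_ne1, hae_gtα] with u h1 h2
    exact (hconds u h2.1 (lt_of_le_of_ne h2.2 h1)).1
  have hupI : ∫ u in α..(1:ℝ), condVaR m μ u Y ω
      ≤ ∫ u in α..(1:ℝ), (c₀ + c₁ * q₂ u) := by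
    refine intervalIntegral.integral_mono_ae_restrict hα1.le hfint
      ((intervalIntegrable_const).add (hq₂int.const_mul c₁)) ?_
    filter_upwards [hae_ne1, hae_gtα] with u h1 h2
    exact (hconds u h2.1 (lt_of_le_of_ne h2.2 h1)).2
  constructor
  · rw [intervalIntegral.integral_const_mul] at hlowI
    calc Cl * ((1 - α)⁻¹ * ∫ y in α..(1:ℝ), Real.sqrt (a₁ * q₂ y + b)) * s
        = (1 - α)⁻¹ * (c * ∫ y in α..(1:ℝ), Real.sqrt (a₁ * q₂ y + b)) := by rw [hc]; ring
      _ ≤ (1 - α)⁻¹ * ∫ u in α..(1:ℝ), condVaR m μ u Y ω :=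
        mul_le_mul_of_nonneg_left hlowI (inv_nonneg.2 h1α.le)
  · have heq : ∫ u in α..(1:ℝ), (c₀ + c₁ * q₂ u)
        = (1 - α) * c₀ + c₁ * ∫ u in α..(1:ℝ), q₂ u := by
      rw [intervalIntegral.integral_add intervalIntegrable_const (hq₂int.const_mul c₁),
        intervalIntegral.integral_const, intervalIntegral.integral_const_mul, smul_eq_mul]
    have h3 : (1 - α)⁻¹ * ∫ u in α..(1:ℝ), condVaR m μ u Y ω
        ≤ (1 - α)⁻¹ * ((1 - α) * c₀ + c₁ * ∫ u in α..(1:ℝ), q₂ u) := by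
      rw [← heq]
      exact mul_le_mul_of_nonneg_left hupI (inv_nonneg.2 h1α.le)
    calc (1 - α)⁻¹ * ∫ u in α..(1:ℝ), condVaR m μ u Y ω
        ≤ (1 - α)⁻¹ * ((1 - α) * c₀ + c₁ * ∫ u in α..(1:ℝ), q₂ u) := h3
      _ = c₀ + c₁ * ((1 - α)⁻¹ * ∫ u in α..(1:ℝ), q₂ u) := by
          field_simp
      _ = (A + B * a₀) + (B * (b + a₁ * ((1 - α)⁻¹ * ∫ u in α..(1:ℝ), q₂ u))) * s ^ 2 := by
          rw [hc₀, hc₁]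
          ring

end Work

end AVaRAux

open AVaRAux

set_option maxHeartbeats 1600000 in
/-- Lower bound for the time-consistent Average Value-at-Risk of the terminal GARCH(1,1) loss:
`ÃVaR^α_t(L_T) ≥ κ ((1/(1−α)) ∫_α^1 √(a₁ F_{Z²}^{-1}(y) + b) dy)^{T-t-1} σ_{t+1}`
with `κ = (1/(1−α)) ∫_α^1 F_Z^{-1}(u) du`. -/
theorem timeConsistent_AVaR_lower_bound {Ω : Type*} [mΩ : MeasurableSpace Ω]
    [StandardBorelSpace Ω] [Nonempty Ω] (μ : Measure Ω) [IsProbabilityMeasure μ]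
    (ℱ : ℕ → MeasurableSpace Ω) (hℱ : ∀ t, ℱ t ≤ mΩ) (hmonoℱ : Monotone ℱ)
    (T : ℕ) (a₀ a₁ b : ℝ) (ha₀ : 0 < a₀) (ha₁ : 0 < a₁) (hb : 0 < b)
    (L σ Z : ℕ → Ω → ℝ)
    -- GARCH(1,1) dynamics
    (hL : ∀ t, 1 ≤ t → t ≤ T → ∀ ω, L t ω = σ t ω * Z t ω)
    (hσrec : ∀ t, 1 ≤ t → t ≤ T → ∀ ω,
      σ t ω ^ 2 = a₀ + a₁ * L (t - 1) ω ^ 2 + b * σ (t - 1) ω ^ 2)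
    (hσmeas : ∀ t, Measurable[ℱ t] (σ (t + 1))) (hσpos : ∀ t ω, 0 < σ t ω)
    (hZmeas : ∀ t, Measurable (Z t))
    -- innovations independent of the past
    (hindep : ∀ t, Indep (MeasurableSpace.comap (Z (t + 1)) Real.measurableSpace) (ℱ t) μ)
    -- identically distributed, symmetric innovations with nice distribution function
    (hident : ∀ t, 1 ≤ t → t ≤ T → μ.map (Z t) = μ.map (Z 1))
    (hsym : μ.map (Z 1) = μ.map (fun ω => -(Z 1 ω)))
    (hmono : StrictMono (distFun μ (Z 1))) (hcont : Continuous (distFun μ (Z 1)))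
    (α : ℝ) (hα : α ∈ Set.Ioo (0 : ℝ) 1) (hqpos : 0 < quantileFun (distFun μ (Z 1)) α)
    (hZ2int : Integrable (fun ω => Z 1 ω ^ 2) μ)
    -- time-consistent AVaR defined by backward recursion
    (AV : ℕ → (Ω → ℝ) → Ω → ℝ)
    (hAVT : ∀ X : Ω → ℝ, AV T X = X)
    (hAVrec : ∀ t, t < T → ∀ X : Ω → ℝ, ∀ ω,
      AV t X ω = (1 - α)⁻¹ * ∫ u in α..(1 : ℝ), condVaR (ℱ t) μ u (AV (t + 1) X) ω)
    (κ : ℝ)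
    (hκ : κ = (1 - α)⁻¹ * ∫ u in α..(1 : ℝ), quantileFun (distFun μ (Z 1)) u) :
    ∀ t, t < T → ∀ᵐ ω ∂μ,
      κ * ((1 - α)⁻¹ * ∫ y in α..(1 : ℝ),
              Real.sqrt (a₁ * quantileFun (distFun μ (fun ω' => Z 1 ω' ^ 2)) y + b)) ^ (T - t - 1)
          * σ (t + 1) ω
        ≤ AV t (L T) ω := by
  classical
  obtain ⟨hα0, hα1⟩ := hα
  have h1α : (0:ℝ) < 1 - α := by linarith
  have hZ1 : Measurable (Z 1) := hZmeas 1
  have hsqm : Measurable fun z : ℝ => z ^ 2 := measurable_id.pow_const 2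
  have hZ1sq : Measurable fun x => Z 1 x ^ 2 := hsqm.comp hZ1
  have hZ1int : Integrable (Z 1) μ := by
    have hgint : Integrable (fun x => 1 + Z 1 x ^ 2) μ :=
      ((integrable_const (1:ℝ)).add hZ2int).congr
        (ae_of_all _ (fun x => by simp only [Pi.add_apply]))
    refine hgint.mono' hZ1.aestronglyMeasurable ?_
    refine ae_of_all _ (fun x => ?_)
    rw [Real.norm_eq_abs]
    nlinarith [sq_nonneg (|Z 1 x| - 1), sq_abs (Z 1 x), abs_nonneg (Z 1 x)]
  have hq₁On : IntegrableOn (quantileFun (distFun μ (Z 1))) (Ioo (0:ℝ) 1) volume :=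
    quantile_integrableOn μ hZ1 hZ1int
  have hsub01 : Ioo α (1:ℝ) ⊆ Ioo (0:ℝ) 1 := fun x hx => ⟨lt_trans hα0 hx.1, hx.2⟩
  have hq₁int : IntervalIntegrable (quantileFun (distFun μ (Z 1))) volume α 1 := by
    rw [intervalIntegrable_iff_integrableOn_Ioo_of_le hα1.le]
    exact hq₁On.mono_set hsub01
  have hae_ne1 : ∀ᵐ u ∂(volume.restrict (Icc α (1:ℝ))), u ≠ 1 := by
    refine ae_restrict_of_ae ?_
    have := measure_eq_zero_iff_ae_notMem.mp (Real.volume_singleton (a := (1:ℝ)))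
    filter_upwards [this] with u hu
    simpa [mem_singleton_iff] using hu
  have hae_mem : ∀ᵐ u ∂(volume.restrict (Icc α (1:ℝ))), α ≤ u ∧ u ≤ 1 := by
    filter_upwards [ae_restrict_mem measurableSet_Icc] with u hu
    exact ⟨hu.1, hu.2⟩
  have hκpos : 0 < κ := by
    have hmono' : ∀ u : ℝ, α ≤ u → u < 1 →
        quantileFun (distFun μ (Z 1)) α ≤ quantileFun (distFun μ (Z 1)) u := fun u h1 h2 =>
      quantile_monotoneOn μ hZ1 ⟨hα0, hα1⟩ ⟨lt_of_lt_of_le hα0 h1, h2⟩ h1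
    have hlow : ∫ _u in α..(1:ℝ), quantileFun (distFun μ (Z 1)) α
        ≤ ∫ u in α..(1:ℝ), quantileFun (distFun μ (Z 1)) u := by
      refine intervalIntegral.integral_mono_ae_restrict hα1.le
        intervalIntegrable_const hq₁int ?_
      filter_upwards [hae_ne1, hae_mem] with u h1 h2
      exact hmono' u h2.1 (lt_of_le_of_ne h2.2 h1)
    rw [intervalIntegral.integral_const, smul_eq_mul] at hlow
    rw [hκ]
    calc (0:ℝ) < (1-α)⁻¹ * ((1-α) * quantileFun (distFun μ (Z 1)) α) :=
          mul_pos (inv_pos.2 h1α) (mul_pos h1α hqpos)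
      _ ≤ (1-α)⁻¹ * ∫ u in α..(1:ℝ), quantileFun (distFun μ (Z 1)) u :=
          mul_le_mul_of_nonneg_left hlow (inv_nonneg.2 h1α.le)
  -- facts about q₂ := quantile of Z₁²
  have hq₂On : IntegrableOn (quantileFun (distFun μ (fun ω' => Z 1 ω' ^ 2)))
      (Ioo (0:ℝ) 1) volume := quantile_integrableOn μ hZ1sq hZ2int
  have hq₂int : IntervalIntegrable (quantileFun (distFun μ (fun ω' => Z 1 ω' ^ 2)))
      volume α 1 := by
    rw [intervalIntegrable_iff_integrableOn_Ioo_of_le hα1.le]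
    exact hq₂On.mono_set hsub01
  have hq₂ae : AEMeasurable (quantileFun (distFun μ (fun ω' => Z 1 ω' ^ 2)))
      (volume.restrict (Ioo α 1)) :=
    (quantile_aemeasurable μ hZ1sq).mono_measure (Measure.restrict_mono hsub01 le_rfl)
  have hq₂nonneg : ∀ u : ℝ, 0 ≤ quantileFun (distFun μ (fun ω' => Z 1 ω' ^ 2)) u := by
    intro u
    rcases le_or_gt u 0 with hu | hu
    · have hset : {x : ℝ | u ≤ distFun μ (fun ω' => Z 1 ω' ^ 2) x} = univ := by
        ext x
        simp only [mem_setOf_eq, mem_univ, iff_true]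
        exact hu.trans (AVaRAux.distFun_nonneg μ _ x)
      rw [quantileFun, hset, Real.sInf_of_not_bddBelow (not_bddBelow_univ)]
    · refine Real.sInf_nonneg (fun x hx => ?_)
      by_contra hneg
      push_neg at hneg
      rw [mem_setOf_eq, AVaRAux.distFun_neg_of_nonneg μ (fun x => sq_nonneg _) hneg] at hx
      exact absurd hx (not_le.2 hu)
  have hQnn : 0 ≤ (1-α)⁻¹ * ∫ u in α..(1:ℝ), quantileFun (distFun μ (fun ω' => Z 1 ω' ^ 2)) u :=
    mul_nonneg (inv_nonneg.2 h1α.le)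
      (intervalIntegral.integral_nonneg hα1.le (fun u _ => hq₂nonneg u))
  -- the sqrt integrand
  have hsqrtint : IntervalIntegrable
      (fun y => Real.sqrt (a₁ * quantileFun (distFun μ (fun ω' => Z 1 ω' ^ 2)) y + b))
      volume α 1 := by
    rw [intervalIntegrable_iff_integrableOn_Ioo_of_le hα1.le]
    refine Integrable.mono' (g := fun y =>
        1 + (a₁ * quantileFun (distFun μ (fun ω' => Z 1 ω' ^ 2)) y + b))
      (((integrable_const (1:ℝ)).add (((hq₂On.mono_set hsub01).const_mul a₁).add
        (integrable_const b))).congr (by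
          refine ae_of_all _ (fun y => ?_)
          simp only [Pi.add_apply]
          try ring))
      (((Real.continuous_sqrt.comp (by continuity :
          Continuous fun t : ℝ => a₁ * t + b)).measurable.comp_aemeasurable
            hq₂ae).aestronglyMeasurable) ?_
    filter_upwards [ae_restrict_mem measurableSet_Ioo] with y _
    have h0 : 0 ≤ a₁ * quantileFun (distFun μ (fun ω' => Z 1 ω' ^ 2)) y + b := by
      nlinarith [hq₂nonneg y, ha₁.le, hb.le]
    rw [Real.norm_eq_abs, abs_of_nonneg (Real.sqrt_nonneg _)]
    nlinarith [Real.sq_sqrt h0, Real.sqrt_nonneg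
      (a₁ * quantileFun (distFun μ (fun ω' => Z 1 ω' ^ 2)) y + b),
      sq_nonneg (Real.sqrt (a₁ * quantileFun (distFun μ (fun ω' => Z 1 ω' ^ 2)) y + b) - 1)]
  have hMsqrtb : Real.sqrt b ≤ (1-α)⁻¹ * ∫ y in α..(1:ℝ),
      Real.sqrt (a₁ * quantileFun (distFun μ (fun ω' => Z 1 ω' ^ 2)) y + b) := by
    have hlow : ∫ _y in α..(1:ℝ), Real.sqrt b ≤ ∫ y in α..(1:ℝ),
        Real.sqrt (a₁ * quantileFun (distFun μ (fun ω' => Z 1 ω' ^ 2)) y + b) := by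
      refine intervalIntegral.integral_mono_ae_restrict hα1.le
        intervalIntegrable_const hsqrtint ?_
      refine ae_of_all _ (fun y => ?_)
      exact Real.sqrt_le_sqrt (by nlinarith [hq₂nonneg y, ha₁.le])
    rw [intervalIntegral.integral_const, smul_eq_mul] at hlow
    calc Real.sqrt b = (1-α)⁻¹ * ((1-α) * Real.sqrt b) := by field_simp
      _ ≤ _ := mul_le_mul_of_nonneg_left hlow (inv_nonneg.2 h1α.le)
  have hMpos : 0 < (1-α)⁻¹ * ∫ y in α..(1:ℝ),
      Real.sqrt (a₁ * quantileFun (distFun μ (fun ω' => Z 1 ω' ^ 2)) y + b) :=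
    lt_of_lt_of_le (Real.sqrt_pos.2 hb) hMsqrtb
  -- main backward induction
  have main : ∀ d : ℕ, ∀ t : ℕ, t < T → T - 1 - t = d → ∃ A B : ℝ, 0 ≤ A ∧ 0 < B ∧
      ∀ᵐ ω ∂μ, (κ * ((1 - α)⁻¹ * ∫ y in α..(1:ℝ),
          Real.sqrt (a₁ * quantileFun (distFun μ (fun ω' => Z 1 ω' ^ 2)) y + b)) ^ (T - t - 1)
            * σ (t + 1) ω ≤ AV t (L T) ω)
        ∧ AV t (L T) ω ≤ A + B * σ (t + 1) ω ^ 2 := by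
    intro d
    induction d with
    | zero =>
      intro t ht hd
      have htT : t + 1 = T := by omega
      have hT1 : 1 ≤ T := by omega
      have hZT : Measurable (Z T) := hZmeas T
      have hmapT : μ.map (Z T) = μ.map (Z 1) := hident T hT1 le_rfl
      have hSm : Measurable[ℱ t] (σ T) := htT ▸ hσmeas t
      have hindT : Indep (MeasurableSpace.comap (Z T) Real.measurableSpace) (ℱ t) μ :=
        htT ▸ hindep t
      have hbase := AVaRAux.base_eq μ (hℱ t) hZT hSm (fun x => hσpos T x) hindT hα0 hα1
      refine ⟨κ, κ, hκpos.le, hκpos, ?_⟩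
      filter_upwards [hbase] with ω hω
      have hAVeq : AV t (L T) ω
          = (1-α)⁻¹ * ∫ u in α..(1:ℝ), condVaR (ℱ t) μ u (AV (t+1) (L T)) ω :=
        hAVrec t ht (L T) ω
      have hLT : AV (t+1) (L T) = fun x => σ T x * Z T x := by
        rw [htT, hAVT]
        funext x
        exact hL T hT1 le_rfl x
      rw [hLT] at hAVeq
      rw [hω] at hAVeq
      have hqeq : distFun μ (Z T) = distFun μ (Z 1) := AVaRAux.distFun_map_eq hZT hZ1 hmapT
      rw [hqeq, ← hκ] at hAVeq
      have hexp : T - t - 1 = 0 := by omega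
      rw [hexp, pow_zero, mul_one, htT, hAVeq]
      constructor
      · exact le_refl _
      · nlinarith [sq_nonneg (2 * σ T ω - 1), hκpos, (hσpos T ω).le, sq_nonneg (σ T ω)]
    | succ d ih =>
      intro t ht hd
      have ht1 : t + 1 < T := by omega
      obtain ⟨A, B, hA, hB, hIH⟩ := ih (t + 1) ht1 (by omega)
      have hZt : Measurable (Z (t + 1)) := hZmeas (t + 1)
      have hmapt : μ.map (Z (t + 1)) = μ.map (Z 1) := hident (t + 1) (by omega) (by omega)
      have hWsqint : Integrable (fun x => Z (t + 1) x ^ 2) μ := by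
        have h1 : Integrable (fun z : ℝ => z ^ 2) (μ.map (Z 1)) := by
          rw [integrable_map_measure hsqm.aestronglyMeasurable hZ1.aemeasurable]
          exact hZ2int
        rw [← hmapt] at h1
        exact (integrable_map_measure hsqm.aestronglyMeasurable hZt.aemeasurable).1 h1
      have hClpos : 0 < κ * ((1 - α)⁻¹ * ∫ y in α..(1:ℝ),
          Real.sqrt (a₁ * quantileFun (distFun μ (fun ω' => Z 1 ω' ^ 2)) y + b))
            ^ (T - (t + 1) - 1) :=
        mul_pos hκpos (pow_pos hMpos _)
      have hidx : t + 2 - 1 = t + 1 := rfl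
      have hσ2 : ∀ x, σ (t + 2) x ^ 2
          = a₀ + a₁ * σ (t+1) x ^ 2 * Z (t+1) x ^ 2 + b * σ (t+1) x ^ 2 := by
        intro x
        have h1 := hσrec (t + 2) (by omega) (by omega) x
        rw [hidx, hL (t + 1) (by omega) (by omega) x] at h1
        rw [h1]
        ring
      have hσ2low : ∀ x, σ (t+1) x * Real.sqrt (a₁ * Z (t+1) x ^ 2 + b) ≤ σ (t + 2) x := by
        intro x
        have h2 : (σ (t+1) x * Real.sqrt (a₁ * Z (t+1) x ^ 2 + b)) ^ 2 ≤ σ (t+2) x ^ 2 := by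
          rw [mul_pow, Real.sq_sqrt (by nlinarith [sq_nonneg (Z (t+1) x), ha₁.le, hb.le] :
            (0:ℝ) ≤ a₁ * Z (t+1) x ^ 2 + b), hσ2 x]
          nlinarith [sq_nonneg (σ (t+1) x), sq_nonneg (Z (t+1) x)]
        have h3 := Real.sqrt_le_sqrt h2
        rwa [Real.sqrt_sq (mul_nonneg (hσpos (t+1) x).le (Real.sqrt_nonneg _)),
          Real.sqrt_sq (hσpos (t+2) x).le] at h3
      have hYlow : ∀ᵐ x ∂μ, (κ * ((1 - α)⁻¹ * ∫ y in α..(1:ℝ),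
          Real.sqrt (a₁ * quantileFun (distFun μ (fun ω' => Z 1 ω' ^ 2)) y + b))
            ^ (T - (t + 1) - 1))
          * (σ (t+1) x * Real.sqrt (a₁ * Z (t+1) x ^ 2 + b)) ≤ AV (t+1) (L T) x := by
        filter_upwards [hIH] with x hx
        refine le_trans ?_ hx.1
        have := hσ2low x
        nlinarith [hClpos]
      have hYup : ∀ᵐ x ∂μ, AV (t+1) (L T) x
          ≤ A + B * (a₀ + a₁ * σ (t+1) x ^ 2 * Z (t+1) x ^ 2 + b * σ (t+1) x ^ 2) := by
        filter_upwards [hIH] with x hx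
        calc AV (t+1) (L T) x ≤ A + B * σ (t+2) x ^ 2 := hx.2
          _ = _ := by rw [hσ2 x]
      have hstep := AVaRAux.step_bound μ (hℱ t) hZt (hσmeas t) (fun x => hσpos (t+1) x)
        (hindep t) ha₀ ha₁ hb hα0 hα1 hClpos hA hB hWsqint hYlow hYup
      have hqeq : distFun μ (fun x => Z (t+1) x ^ 2) = distFun μ (fun x => Z 1 x ^ 2) :=
        AVaRAux.distFun_sq_map_eq hZt hZ1 hmapt
      rw [hqeq] at hstep
      refine ⟨A + B * a₀, B * (b + a₁ * ((1 - α)⁻¹ * ∫ u in α..(1:ℝ),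
          quantileFun (distFun μ (fun x => Z 1 x ^ 2)) u)), ?_, ?_, ?_⟩
      · nlinarith [mul_nonneg hB.le ha₀.le]
      · refine mul_pos hB ?_
        have hQnn' : 0 ≤ (1 - α)⁻¹ * ∫ u in α..(1:ℝ),
            quantileFun (distFun μ (fun x => Z 1 x ^ 2)) u := hQnn
        nlinarith [ha₁.le, hb]
      · filter_upwards [hstep] with ω hω
        have hAVeq : AV t (L T) ω
            = (1-α)⁻¹ * ∫ u in α..(1:ℝ), condVaR (ℱ t) μ u (AV (t+1) (L T)) ω :=
          hAVrec t (by omega) (L T) ω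
        rw [hAVeq]
        constructor
        · have hexp : T - t - 1 = (T - (t + 1) - 1) + 1 := by omega
          rw [hexp, pow_succ]
          refine le_trans (le_of_eq ?_) hω.1
          ring
        · exact hω.2
  -- conclusion
  intro t ht
  obtain ⟨A, B, _, _, h⟩ := main (T - 1 - t) t ht rfl
  filter_upwards [h] with ω hω
  exact hω.1
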